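/- arXiv:math/0111080 — 5 statements merged into one kernel-verified Lean document; each statement's English description precedes it below -/
import Mathlib

section
/- Let E be a finite-dimensional real inner product space, X₁, X₂, Y pairwise orthogonal subspaces, a₁ ∈ X₁, a₂ ∈ X₂, b ∈ Y, π₁(ρ) = P₁ρ + a₂ + b, π₂(ρ) = a₁ + P₂ρ + b (Pᵢ = orthogonal projection onto Xᵢ), i.e. b₁ = b₂ = b (the constraint sets intersect). Let β, γ₁, γ₂ be real with 0 < βγ₂ < 2 and −2 < βγ₁ < 0, let fᵢ(ρ) = (1 + γᵢ)πᵢ(ρ) − γᵢρ and D(ρ) = ρ + β(π₁(f₂(ρ)) − π₂(f₁(ρ))). Then for every ρ = x₁ + x₂ + y with x₁ ∈ X₁, x₂ ∈ X₂, y ∈ Y: Dⁿ(ρ) = a₁ + a₂ + y + (1 − βγ₂)ⁿ(x₁ − a₁) + (1 + βγ₁)ⁿ(x₂ − a₂) for all n, the iterates Dⁿ(ρ) converge to ρ* = a₁ + a₂ + y as n → ∞, and ρ* is a fixed point of D. -/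
open Filter

private lemma proj_triple_aux {E : Type*} [NormedAddCommGroup E] [InnerProductSpace ℝ E]
    [FiniteDimensional ℝ E] (K : Submodule ℝ E) (u v : E) (hu : u ∈ K)
    (hv : ∀ w ∈ K, inner (𝕜 := ℝ) v w = 0) :
    (K.orthogonalProjectionOnto (u + v) : E) = u := by
  rw [← Submodule.starProjection_apply]
  apply Submodule.eq_starProjection_of_mem_of_inner_eq_zero hu
  intro w hw
  simpa using hv w hw

/-- When the constraint sets intersect (`b₁ = b₂ = b`) and `0 < βγ₂ < 2`,
`−2 < βγ₁ < 0`, the difference map iterates converge geometrically to the fixed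
point `ρ* = a₁ + a₂ + y`. -/
theorem difference_map_local_convergence
    {E : Type*} [NormedAddCommGroup E] [InnerProductSpace ℝ E] [FiniteDimensional ℝ E]
    (X₁ X₂ Y : Submodule ℝ E)
    (hX₁X₂ : ∀ u ∈ X₁, ∀ v ∈ X₂, inner (𝕜 := ℝ) u v = 0)
    (hX₁Y : ∀ u ∈ X₁, ∀ v ∈ Y, inner (𝕜 := ℝ) u v = 0)
    (hX₂Y : ∀ u ∈ X₂, ∀ v ∈ Y, inner (𝕜 := ℝ) u v = 0)
    (a₁ : E) (ha₁ : a₁ ∈ X₁) (a₂ : E) (ha₂ : a₂ ∈ X₂)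
    (b : E) (hb : b ∈ Y)
    (π₁ π₂ : E → E)
    (hπ₁ : ∀ ρ, π₁ ρ = (X₁.orthogonalProjectionOnto ρ : E) + a₂ + b)
    (hπ₂ : ∀ ρ, π₂ ρ = a₁ + (X₂.orthogonalProjectionOnto ρ : E) + b)
    (β γ₁ γ₂ : ℝ)
    (hβγ₂ : 0 < β * γ₂) (hβγ₂' : β * γ₂ < 2)
    (hβγ₁ : -2 < β * γ₁) (hβγ₁' : β * γ₁ < 0)
    (f₁ f₂ : E → E)
    (hf₁ : ∀ ρ, f₁ ρ = (1 + γ₁) • π₁ ρ - γ₁ • ρ)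
    (hf₂ : ∀ ρ, f₂ ρ = (1 + γ₂) • π₂ ρ - γ₂ • ρ)
    (D : E → E) (hD : ∀ ρ, D ρ = ρ + β • (π₁ (f₂ ρ) - π₂ (f₁ ρ))) :
    ∀ x₁ ∈ X₁, ∀ x₂ ∈ X₂, ∀ y ∈ Y,
      (∀ n : ℕ, D^[n] (x₁ + x₂ + y) = a₁ + a₂ + y
        + (1 - β * γ₂) ^ n • (x₁ - a₁) + (1 + β * γ₁) ^ n • (x₂ - a₂)) ∧
      Filter.Tendsto (fun n : ℕ => D^[n] (x₁ + x₂ + y))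
        Filter.atTop (nhds (a₁ + a₂ + y)) ∧
      D (a₁ + a₂ + y) = a₁ + a₂ + y := by
  -- projection formulas
  have hP₁ : ∀ u ∈ X₁, ∀ v ∈ X₂, ∀ w ∈ Y,
      (X₁.orthogonalProjectionOnto (u + v + w) : E) = u := by
    intro u hu v hv w hw
    rw [add_assoc]
    apply proj_triple_aux _ _ _ hu
    intro z hz
    have h1 : inner (𝕜 := ℝ) v z = 0 := by rw [real_inner_comm]; exact hX₁X₂ z hz v hv
    have h2 : inner (𝕜 := ℝ) w z = 0 := by rw [real_inner_comm]; exact hX₁Y z hz w hw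
    rw [inner_add_left, h1, h2]; ring
  have hP₂ : ∀ u ∈ X₁, ∀ v ∈ X₂, ∀ w ∈ Y,
      (X₂.orthogonalProjectionOnto (u + v + w) : E) = v := by
    intro u hu v hv w hw
    have : u + v + w = v + (u + w) := by abel
    rw [this]
    apply proj_triple_aux _ _ _ hv
    intro z hz
    have h2 : inner (𝕜 := ℝ) w z = 0 := by rw [real_inner_comm]; exact hX₂Y z hz w hw
    rw [inner_add_left, hX₁X₂ u hu z hz, h2]; ring
  -- one-step formula
  have key : ∀ x₁ ∈ X₁, ∀ x₂ ∈ X₂, ∀ y ∈ Y,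
      D (x₁ + x₂ + y) = a₁ + a₂ + y
        + (1 - β * γ₂) • (x₁ - a₁) + (1 + β * γ₁) • (x₂ - a₂) := by
    intro x₁ hx₁ x₂ hx₂ y hy
    have e1 : f₁ (x₁ + x₂ + y)
        = x₁ + ((1 + γ₁) • a₂ - γ₁ • x₂) + ((1 + γ₁) • b - γ₁ • y) := by
      rw [hf₁, hπ₁, hP₁ x₁ hx₁ x₂ hx₂ y hy]; module
    have e2 : f₂ (x₁ + x₂ + y)
        = ((1 + γ₂) • a₁ - γ₂ • x₁) + x₂ + ((1 + γ₂) • b - γ₂ • y) := by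
      rw [hf₂, hπ₂, hP₂ x₁ hx₁ x₂ hx₂ y hy]; module
    rw [hD, e1, e2, hπ₁, hπ₂,
      hP₁ _ (X₁.sub_mem (X₁.smul_mem _ ha₁) (X₁.smul_mem _ hx₁)) _ hx₂ _
        (Y.sub_mem (Y.smul_mem _ hb) (Y.smul_mem _ hy)),
      hP₂ _ hx₁ _ (X₂.sub_mem (X₂.smul_mem _ ha₂) (X₂.smul_mem _ hx₂)) _
        (Y.sub_mem (Y.smul_mem _ hb) (Y.smul_mem _ hy))]
    module
  intro x₁ hx₁ x₂ hx₂ y hy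
  have hiter : ∀ n : ℕ, D^[n] (x₁ + x₂ + y) = a₁ + a₂ + y
      + (1 - β * γ₂) ^ n • (x₁ - a₁) + (1 + β * γ₁) ^ n • (x₂ - a₂) := by
    intro n
    induction n with
    | zero => simp only [Function.iterate_zero, id_eq, pow_zero, one_smul]; abel
    | succ n ih =>
      rw [Function.iterate_succ_apply', ih]
      have hx₁' : a₁ + (1 - β * γ₂) ^ n • (x₁ - a₁) ∈ X₁ :=
        X₁.add_mem ha₁ (X₁.smul_mem _ (X₁.sub_mem hx₁ ha₁))
      have hx₂' : a₂ + (1 + β * γ₁) ^ n • (x₂ - a₂) ∈ X₂ :=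
        X₂.add_mem ha₂ (X₂.smul_mem _ (X₂.sub_mem hx₂ ha₂))
      have hform : a₁ + a₂ + y + (1 - β * γ₂) ^ n • (x₁ - a₁)
          + (1 + β * γ₁) ^ n • (x₂ - a₂)
          = (a₁ + (1 - β * γ₂) ^ n • (x₁ - a₁))
            + (a₂ + (1 + β * γ₁) ^ n • (x₂ - a₂)) + y := by abel
      rw [hform, key _ hx₁' _ hx₂' _ hy]
      have h1 : a₁ + (1 - β * γ₂) ^ n • (x₁ - a₁) - a₁
          = (1 - β * γ₂) ^ n • (x₁ - a₁) := by abel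
      have h2 : a₂ + (1 + β * γ₁) ^ n • (x₂ - a₂) - a₂
          = (1 + β * γ₁) ^ n • (x₂ - a₂) := by abel
      rw [h1, h2, smul_smul, smul_smul, ← pow_succ']
      rw [← pow_succ']
  refine ⟨hiter, ?_, ?_⟩
  · have hc₂ : |1 - β * γ₂| < 1 := by rw [abs_lt]; constructor <;> linarith
    have hc₁ : |1 + β * γ₁| < 1 := by rw [abs_lt]; constructor <;> linarith
    have t2 := (tendsto_pow_atTop_nhds_zero_of_abs_lt_one hc₂).smul_const (x₁ - a₁)
    have t1 := (tendsto_pow_atTop_nhds_zero_of_abs_lt_one hc₁).smul_const (x₂ - a₂)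
    rw [zero_smul] at t1 t2
    have := ((tendsto_const_nhds (x := a₁ + a₂ + y) (f := atTop)).add t2).add t1
    simp only [add_zero] at this
    refine this.congr fun n => ?_
    rw [hiter n]
  · have := key a₁ ha₁ a₂ ha₂ y hy
    simpa using this
end

section
/- Let E be a finite-dimensional real inner product space, X₁, X₂, Y pairwise orthogonal subspaces, a₁ ∈ X₁, a₂ ∈ X₂, b ∈ Y, π₁(ρ) = P₁ρ + a₂ + b, π₂(ρ) = a₁ + P₂ρ + b (Pᵢ = orthogonal projection onto Xᵢ). Let β ≠ 0 and take the optimal parameters γ₂ = β⁻¹, γ₁ = −β⁻¹, with fᵢ(ρ) = (1 + γᵢ)πᵢ(ρ) − γᵢρ and D(ρ) = ρ + β(π₁(f₂(ρ)) − π₂(f₁(ρ))). Then for every ρ = x₁ + x₂ + y with x₁ ∈ X₁, x₂ ∈ X₂, y ∈ Y: (i) D(ρ) = a₁ + a₂ + y, so convergence to a fixed point occurs in a single iteration; and (ii) (π₁ ∘ f₂)(a₁ + a₂ + y) = a₁ + a₂ + b, which lies in C₁ ∩ C₂, where C₁ = {x + a₂ + b : x ∈ X₁} and C₂ = {a₁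 + x + b : x ∈ X₂}. Hence the solution is recovered from the fixed point by one application of π₁ ∘ f₂. -/
/-- With the optimal parameters `γ₂ = β⁻¹`, `γ₁ = −β⁻¹` and intersecting constraint
sets, the difference map converges in a single iteration to `a₁ + a₂ + y`, and one
application of `π₁ ∘ f₂` to the fixed point recovers the solution `a₁ + a₂ + b ∈ C₁ ∩ C₂`. -/
theorem difference_map_optimal_parameters_one_step
    {E : Type*} [NormedAddCommGroup E] [InnerProductSpace ℝ E] [FiniteDimensional ℝ E]
    (X₁ X₂ Y : Submodule ℝ E)
    (hX₁X₂ : ∀ u ∈ X₁, ∀ v ∈ X₂, inner (𝕜 := ℝ) u v = 0)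
    (hX₁Y : ∀ u ∈ X₁, ∀ v ∈ Y, inner (𝕜 := ℝ) u v = 0)
    (hX₂Y : ∀ u ∈ X₂, ∀ v ∈ Y, inner (𝕜 := ℝ) u v = 0)
    (a₁ : E) (ha₁ : a₁ ∈ X₁) (a₂ : E) (ha₂ : a₂ ∈ X₂)
    (b : E) (hb : b ∈ Y)
    (π₁ π₂ : E → E)
    (hπ₁ : ∀ ρ, π₁ ρ = (Submodule.orthogonalProjectionOnto X₁ ρ : E) + a₂ + b)
    (hπ₂ : ∀ ρ, π₂ ρ = a₁ + (Submodule.orthogonalProjectionOnto X₂ ρ : E) + b)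
    (β : ℝ) (hβ : β ≠ 0) (γ₁ γ₂ : ℝ) (hγ₂ : γ₂ = β⁻¹) (hγ₁ : γ₁ = -β⁻¹)
    (f₁ f₂ : E → E)
    (hf₁ : ∀ ρ, f₁ ρ = (1 + γ₁) • π₁ ρ - γ₁ • ρ)
    (hf₂ : ∀ ρ, f₂ ρ = (1 + γ₂) • π₂ ρ - γ₂ • ρ)
    (D : E → E) (hD : ∀ ρ, D ρ = ρ + β • (π₁ (f₂ ρ) - π₂ (f₁ ρ)))
    (C₁ C₂ : Set E)
    (hC₁ : C₁ = {z | ∃ x ∈ X₁, z = x + a₂ + b})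
    (hC₂ : C₂ = {z | ∃ x ∈ X₂, z = a₁ + x + b}) :
    ∀ x₁ ∈ X₁, ∀ x₂ ∈ X₂, ∀ y ∈ Y,
      D (x₁ + x₂ + y) = a₁ + a₂ + y ∧
      π₁ (f₂ (a₁ + a₂ + y)) = a₁ + a₂ + b ∧
      a₁ + a₂ + b ∈ C₁ ∩ C₂ := by

  -- helper facts
  have m12 : ∀ v ∈ X₂, v ∈ X₁ᗮ := fun v hv =>
    (Submodule.mem_orthogonal X₁ v).mpr (fun u hu => hX₁X₂ u hu v hv)
  have m1Y : ∀ v ∈ Y, v ∈ X₁ᗮ := fun v hv =>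
    (Submodule.mem_orthogonal X₁ v).mpr (fun u hu => hX₁Y u hu v hv)
  have m21 : ∀ v ∈ X₁, v ∈ X₂ᗮ := fun v hv =>
    (Submodule.mem_orthogonal X₂ v).mpr (fun u hu =>
      (real_inner_comm u v) ▸ hX₁X₂ v hv u hu)
  have m2Y : ∀ v ∈ Y, v ∈ X₂ᗮ := fun v hv =>
    (Submodule.mem_orthogonal X₂ v).mpr (fun u hu => hX₂Y u hu v hv)
  have p1self : ∀ z ∈ X₁, (Submodule.orthogonalProjectionOnto X₁ z : E) = z := fun z hz => by
    exact Submodule.starProjection_eq_self_iff.mpr hz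
  have p2self : ∀ z ∈ X₂, (Submodule.orthogonalProjectionOnto X₂ z : E) = z := fun z hz => by
    exact Submodule.starProjection_eq_self_iff.mpr hz
  have p1zero : ∀ z ∈ X₁ᗮ, (Submodule.orthogonalProjectionOnto X₁ z : E) = 0 := fun z hz => by
    simp [Submodule.orthogonalProjectionOnto_apply_of_mem_orthogonal hz]
  have p2zero : ∀ z ∈ X₂ᗮ, (Submodule.orthogonalProjectionOnto X₂ z : E) = 0 := fun z hz => by
    simp [Submodule.orthogonalProjectionOnto_apply_of_mem_orthogonal hz]
  intro x₁ hx₁ x₂ hx₂ y hy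
  have hββ : β * β⁻¹ = 1 := mul_inv_cancel₀ hβ
  -- projection of a generic point
  have key1 : ∀ u ∈ X₁, ∀ v ∈ X₂, ∀ w ∈ Y, (Submodule.orthogonalProjectionOnto X₁ (u + v + w) : E) = u := by
    intro u hu v hv w hw
    simp [map_add, p1self u hu, p1zero v (m12 v hv), p1zero w (m1Y w hw)]
  have key2 : ∀ u ∈ X₁, ∀ v ∈ X₂, ∀ w ∈ Y, (Submodule.orthogonalProjectionOnto X₂ (u + v + w) : E) = v := by
    intro u hu v hv w hw
    simp [map_add, p2self v hv, p2zero u (m21 u hu), p2zero w (m2Y w hw)]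
  have hproj1 : ∀ u ∈ X₁, ∀ v ∈ X₂, ∀ w ∈ Y,
      π₁ (f₂ (u + v + w)) = (1 + β⁻¹) • a₁ - β⁻¹ • u + a₂ + b := by
    intro u hu v hv w hw
    rw [hf₂, hγ₂, hπ₂, hπ₁]
    rw [key2 u hu v hv w hw]
    have hmem : (1 + β⁻¹) • (a₁ + v + b) - β⁻¹ • (u + v + w)
        = ((1 + β⁻¹) • a₁ - β⁻¹ • u) + ((1 : ℝ) • v) + ((1 + β⁻¹) • b - β⁻¹ • w) := by
      module
    rw [show a₁ + v + b = a₁ + v + b from rfl]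
    have : (Submodule.orthogonalProjectionOnto X₁ ((1 + β⁻¹) • (a₁ + v + b) - β⁻¹ • (u + v + w)) : E)
        = (1 + β⁻¹) • a₁ - β⁻¹ • u := by
      rw [hmem, key1 _ (X₁.sub_mem (X₁.smul_mem _ ha₁) (X₁.smul_mem _ hu))
        _ (X₂.smul_mem _ hv) _ (Y.sub_mem (Y.smul_mem _ hb) (Y.smul_mem _ hw))]
    rw [this]
  have hproj2 : ∀ u ∈ X₁, ∀ v ∈ X₂, ∀ w ∈ Y,
      π₂ (f₁ (u + v + w)) = a₁ + ((1 - β⁻¹) • a₂ + β⁻¹ • v) + b := by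
    intro u hu v hv w hw
    rw [hf₁, hγ₁, hπ₁, hπ₂]
    rw [key1 u hu v hv w hw]
    have hmem : (1 + -β⁻¹) • (u + a₂ + b) - (-β⁻¹) • (u + v + w)
        = ((1 : ℝ) • u) + ((1 - β⁻¹) • a₂ + β⁻¹ • v) + ((1 - β⁻¹) • b + β⁻¹ • w) := by
      module
    have : (Submodule.orthogonalProjectionOnto X₂ ((1 + -β⁻¹) • (u + a₂ + b) - (-β⁻¹) • (u + v + w)) : E)
        = (1 - β⁻¹) • a₂ + β⁻¹ • v := by
      rw [hmem, key2 _ (X₁.smul_mem _ hu)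
        _ (X₂.add_mem (X₂.smul_mem _ ha₂) (X₂.smul_mem _ hv))
        _ (Y.add_mem (Y.smul_mem _ hb) (Y.smul_mem _ hw))]
    rw [this]
  refine ⟨?_, ?_, ?_⟩
  · rw [hD, hproj1 x₁ hx₁ x₂ hx₂ y hy, hproj2 x₁ hx₁ x₂ hx₂ y hy]
    have h1 : β • (β⁻¹ • a₁) = a₁ := by rw [smul_smul, hββ, one_smul]
    have h2 : β • (β⁻¹ • a₂) = a₂ := by rw [smul_smul, hββ, one_smul]
    have h3 : β • (β⁻¹ • x₁) = x₁ := by rw [smul_smul, hββ, one_smul]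
    have h4 : β • (β⁻¹ • x₂) = x₂ := by rw [smul_smul, hββ, one_smul]
    have : ((1 + β⁻¹) • a₁ - β⁻¹ • x₁ + a₂ + b - (a₁ + ((1 - β⁻¹) • a₂ + β⁻¹ • x₂) + b))
        = β⁻¹ • a₁ - β⁻¹ • x₁ + β⁻¹ • a₂ - β⁻¹ • x₂ := by module
    rw [this]
    have hsm : β • (β⁻¹ • a₁ - β⁻¹ • x₁ + β⁻¹ • a₂ - β⁻¹ • x₂)
        = a₁ - x₁ + a₂ - x₂ := by
      rw [smul_sub, smul_add, smul_sub, h1, h2, h3, h4]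
    rw [hsm]; abel
  · have := hproj1 a₁ ha₁ a₂ ha₂ y hy
    rw [this]
    have : (1 + β⁻¹) • a₁ - β⁻¹ • a₁ = a₁ := by module
    rw [this]
  · constructor
    · rw [hC₁]; exact ⟨a₁, ha₁, rfl⟩
    · rw [hC₂]; exact ⟨a₂, ha₂, by abel⟩
end

section
/- Let E be a finite-dimensional real inner product space, X₁, X₂, Y pairwise orthogonal subspaces, a₁ ∈ X₁, a₂ ∈ X₂, b₁, b₂ ∈ Y, π₁(ρ) = P₁ρ + a₂ + b₁, π₂(ρ) = a₁ + P₂ρ + b₂ (Pᵢ = orthogonal projection onto Xᵢ). Let β ≠ 0, γ₂ = β⁻¹, γ₁ = −β⁻¹, fᵢ(ρ) = (1 + γᵢ)πᵢ(ρ) − γᵢρ, and D(ρ) = ρ + β(π₁(f₂(ρ)) − π₂(f₁(ρ))). Then for every ρ = x₁ + x₂ + y with x₁ ∈ X₁, x₂ ∈ X₂, y ∈ Y and every n ≥ 1: Dⁿ(ρ) = a₁ + a₂ + y + nβ(b₁ − b₂). In particular, if b₁ ≠ b₂ (the constraint sets do not intersect, a 'trap'), the iterates move away uniformly along the minimum-separation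 axis b₁ − b₂ and ‖Dⁿ(ρ)‖ → ∞; the difference map does not stagnate at a trap. -/
/-- At a trap (`b₁ ≠ b₂`), with optimal parameters, the difference map iterates move
uniformly along the minimum-separation axis: `Dⁿρ = a₁ + a₂ + y + nβ(b₁ − b₂)` for
`n ≥ 1`, and the norms of the iterates tend to infinity; there is no stagnation. -/
theorem difference_map_escapes_traps
    {E : Type*} [NormedAddCommGroup E] [InnerProductSpace ℝ E] [FiniteDimensional ℝ E]
    (X₁ X₂ Y : Submodule ℝ E)
    (hX₁X₂ : ∀ u ∈ X₁, ∀ v ∈ X₂, inner (𝕜 := ℝ) u v = 0)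
    (hX₁Y : ∀ u ∈ X₁, ∀ v ∈ Y, inner (𝕜 := ℝ) u v = 0)
    (hX₂Y : ∀ u ∈ X₂, ∀ v ∈ Y, inner (𝕜 := ℝ) u v = 0)
    (a₁ : E) (ha₁ : a₁ ∈ X₁) (a₂ : E) (ha₂ : a₂ ∈ X₂)
    (b₁ b₂ : E) (hb₁ : b₁ ∈ Y) (hb₂ : b₂ ∈ Y)
    (π₁ π₂ : E → E)
    (hπ₁ : ∀ ρ, π₁ ρ = (Submodule.orthogonalProjectionOnto X₁ ρ : E) + a₂ + b₁)
    (hπ₂ : ∀ ρ, π₂ ρ = a₁ + (Submodule.orthogonalProjectionOnto X₂ ρ : E) + b₂)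
    (β : ℝ) (hβ : β ≠ 0) (γ₁ γ₂ : ℝ) (hγ₂ : γ₂ = β⁻¹) (hγ₁ : γ₁ = -β⁻¹)
    (f₁ f₂ : E → E)
    (hf₁ : ∀ ρ, f₁ ρ = (1 + γ₁) • π₁ ρ - γ₁ • ρ)
    (hf₂ : ∀ ρ, f₂ ρ = (1 + γ₂) • π₂ ρ - γ₂ • ρ)
    (D : E → E) (hD : ∀ ρ, D ρ = ρ + β • (π₁ (f₂ ρ) - π₂ (f₁ ρ))) :
    ∀ x₁ ∈ X₁, ∀ x₂ ∈ X₂, ∀ y ∈ Y,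
      (∀ n : ℕ, 1 ≤ n →
        D^[n] (x₁ + x₂ + y) = a₁ + a₂ + y + ((n : ℝ) * β) • (b₁ - b₂)) ∧
      (b₁ ≠ b₂ →
        Filter.Tendsto (fun n : ℕ => ‖D^[n] (x₁ + x₂ + y)‖)
          Filter.atTop Filter.atTop) := by
  -- projection facts
  have hP₁self : ∀ v ∈ X₁, (Submodule.orthogonalProjectionOnto X₁ v : E) = v := fun v hv =>
    Submodule.starProjection_eq_self_iff.mpr hv
  have hP₂self : ∀ v ∈ X₂, (Submodule.orthogonalProjectionOnto X₂ v : E) = v := fun v hv =>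
    Submodule.starProjection_eq_self_iff.mpr hv
  have hP₁X₂ : ∀ v ∈ X₂, (Submodule.orthogonalProjectionOnto X₁ v : E) = 0 := by
    intro v hv
    rw [Submodule.orthogonalProjectionOnto_apply_of_mem_orthogonal
      ((Submodule.mem_orthogonal X₁ v).mpr fun u hu => hX₁X₂ u hu v hv)]
    simp
  have hP₁Y : ∀ v ∈ Y, (Submodule.orthogonalProjectionOnto X₁ v : E) = 0 := by
    intro v hv
    rw [Submodule.orthogonalProjectionOnto_apply_of_mem_orthogonal
      ((Submodule.mem_orthogonal X₁ v).mpr fun u hu => hX₁Y u hu v hv)]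
    simp
  have hP₂X₁ : ∀ v ∈ X₁, (Submodule.orthogonalProjectionOnto X₂ v : E) = 0 := by
    intro v hv
    rw [Submodule.orthogonalProjectionOnto_apply_of_mem_orthogonal
      ((Submodule.mem_orthogonal X₂ v).mpr fun u hu =>
        by rw [real_inner_comm]; exact hX₁X₂ v hv u hu)]
    simp
  have hP₂Y : ∀ v ∈ Y, (Submodule.orthogonalProjectionOnto X₂ v : E) = 0 := by
    intro v hv
    rw [Submodule.orthogonalProjectionOnto_apply_of_mem_orthogonal
      ((Submodule.mem_orthogonal X₂ v).mpr fun u hu => hX₂Y u hu v hv)]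
    simp
  intro x₁ hx₁ x₂ hx₂ y hy
  -- one-step formula
  have key : ∀ u₁ ∈ X₁, ∀ u₂ ∈ X₂, ∀ w ∈ Y,
      D (u₁ + u₂ + w) = a₁ + a₂ + w + β • (b₁ - b₂) := by
    intro u₁ hu₁ u₂ hu₂ w hw
    have hP₁ρ : (Submodule.orthogonalProjectionOnto X₁ (u₁ + u₂ + w) : E) = u₁ := by
      simp [map_add, hP₁self u₁ hu₁, hP₁X₂ u₂ hu₂, hP₁Y w hw]
    have hP₂ρ : (Submodule.orthogonalProjectionOnto X₂ (u₁ + u₂ + w) : E) = u₂ := by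
      simp [map_add, hP₂self u₂ hu₂, hP₂X₁ u₁ hu₁, hP₂Y w hw]
    have hf₂ρ : f₂ (u₁ + u₂ + w) =
        (1 + γ₂) • (a₁ + u₂ + b₂) - γ₂ • (u₁ + u₂ + w) := by
      rw [hf₂, hπ₂, hP₂ρ]
    have hf₁ρ : f₁ (u₁ + u₂ + w) =
        (1 + γ₁) • (u₁ + a₂ + b₁) - γ₁ • (u₁ + u₂ + w) := by
      rw [hf₁, hπ₁, hP₁ρ]
    have hPf₂ : (Submodule.orthogonalProjectionOnto X₁ (f₂ (u₁ + u₂ + w)) : E) =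
        (1 + γ₂) • a₁ - γ₂ • u₁ := by
      rw [hf₂ρ]
      simp [map_add, map_sub, map_smul, hP₁self a₁ ha₁, hP₁self u₁ hu₁,
        hP₁X₂ u₂ hu₂, hP₁X₂ a₂ ha₂, hP₁Y w hw, hP₁Y b₂ hb₂, smul_add]
    have hPf₁ : (Submodule.orthogonalProjectionOnto X₂ (f₁ (u₁ + u₂ + w)) : E) =
        (1 + γ₁) • a₂ - γ₁ • u₂ := by
      rw [hf₁ρ]
      simp [map_add, map_sub, map_smul, hP₂self a₂ ha₂, hP₂self u₂ hu₂,
        hP₂X₁ u₁ hu₁, hP₂X₁ a₁ ha₁, hP₂Y w hw, hP₂Y b₁ hb₁, smul_add]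
    rw [hD, hπ₁, hπ₂, hPf₂, hPf₁, hγ₁, hγ₂]
    have hβ' : β * β⁻¹ = 1 := mul_inv_cancel₀ hβ
    match_scalars <;> field_simp <;> ring
  -- iterate formula
  have iter : ∀ n : ℕ, 1 ≤ n →
      D^[n] (x₁ + x₂ + y) = a₁ + a₂ + y + ((n : ℝ) * β) • (b₁ - b₂) := by
    intro n hn
    induction n with
    | zero => omega
    | succ m ih =>
      rcases Nat.eq_or_lt_of_le hn with h1 | h1
      · rw [← h1]
        simpa using key x₁ hx₁ x₂ hx₂ y hy
      · have hm : 1 ≤ m := by omega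
        rw [Function.iterate_succ_apply', ih hm]
        have hw : y + ((m : ℝ) * β) • (b₁ - b₂) ∈ Y :=
          Y.add_mem hy (Y.smul_mem _ (Y.sub_mem hb₁ hb₂))
        have := key a₁ ha₁ a₂ ha₂ (y + ((m : ℝ) * β) • (b₁ - b₂)) hw
        rw [show a₁ + a₂ + (y + ((m : ℝ) * β) • (b₁ - b₂))
            = a₁ + a₂ + y + ((m : ℝ) * β) • (b₁ - b₂) by abel] at this
        rw [this]
        push_cast
        match_scalars <;> ring
  refine ⟨iter, fun hb => ?_⟩
  have hpos : 0 < |β| * ‖b₁ - b₂‖ := by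
    apply mul_pos (abs_pos.mpr hβ)
    rw [norm_pos_iff]
    exact sub_ne_zero.mpr hb
  have hlin : Filter.Tendsto
      (fun n : ℕ => (n : ℝ) * (|β| * ‖b₁ - b₂‖) - ‖a₁ + a₂ + y‖)
      Filter.atTop Filter.atTop := by
    apply Filter.Tendsto.atTop_add _ tendsto_const_nhds
    exact Filter.Tendsto.atTop_mul_const hpos tendsto_natCast_atTop_atTop
  apply Filter.tendsto_atTop_mono' _ _ hlin
  filter_upwards [Filter.eventually_ge_atTop 1] with n hn
  rw [iter n hn]
  have h1 : ‖((n : ℝ) * β) • (b₁ - b₂)‖ = (n : ℝ) * (|β| * ‖b₁ - b₂‖) := by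
    rw [norm_smul]
    simp [abs_mul, Nat.abs_cast, mul_assoc, Real.norm_eq_abs]
  calc (n : ℝ) * (|β| * ‖b₁ - b₂‖) - ‖a₁ + a₂ + y‖
      = ‖((n : ℝ) * β) • (b₁ - b₂)‖ - ‖a₁ + a₂ + y‖ := by rw [h1]
    _ ≤ ‖a₁ + a₂ + y + ((n : ℝ) * β) • (b₁ - b₂)‖ := by
        have := norm_add_le (a₁ + a₂ + y + ((n : ℝ) * β) • (b₁ - b₂)) (-(a₁ + a₂ + y))
        simp only [add_neg_cancel_comm, norm_neg] at this
        linarith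
end

section
/- Let N be a natural number, S a subset of Fin N, π₁ = π_supp the support projection on ℝ^N (π₁(ρ)ₙ = ρₙ for n ∈ S, 0 otherwise), and π₂ : ℝ^N → ℝ^N an arbitrary map (the Fourier modulus projection). Take β = 1 with the optimal parameters γ₂ = β⁻¹ = 1, γ₁ = −β⁻¹ = −1, fᵢ(ρ) = (1 + γᵢ)πᵢ(ρ) − γᵢρ, and D(ρ) = ρ + β(π₁(f₂(ρ)) − π₂(f₁(ρ))). Then for every ρ and every n: D(ρ)ₙ = π₂(ρ)ₙ if n ∈ S, and D(ρ)ₙ = ρₙ − π₂(ρ)ₙ if n ∉ S. That is, the difference map with β = 1 and support constraints reproduces Fienup's hybrid input-output map with Fienup parameter 1. -/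
/-- With support constraints and `β = 1` (optimal parameters `γ₂ = 1`, `γ₁ = −1`),
the difference map reproduces Fienup's hybrid input-output map with Fienup parameter 1. -/
theorem difference_map_beta_one_is_hybrid_input_output
    (N : ℕ) (S : Set (Fin N)) [DecidablePred (· ∈ S)]
    (π₁ π₂ : (Fin N → ℝ) → (Fin N → ℝ))
    (hπ₁ : ∀ ρ n, π₁ ρ n = if n ∈ S then ρ n else 0)
    (β γ₁ γ₂ : ℝ) (hβ : β = 1) (hγ₂ : γ₂ = β⁻¹) (hγ₁ : γ₁ = -β⁻¹)
    (f₁ f₂ : (Fin N → ℝ) → (Fin N → ℝ))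
    (hf₁ : ∀ ρ, f₁ ρ = (1 + γ₁) • π₁ ρ - γ₁ • ρ)
    (hf₂ : ∀ ρ, f₂ ρ = (1 + γ₂) • π₂ ρ - γ₂ • ρ)
    (D : (Fin N → ℝ) → (Fin N → ℝ))
    (hD : ∀ ρ, D ρ = ρ + β • (π₁ (f₂ ρ) - π₂ (f₁ ρ))) :
    ∀ ρ : Fin N → ℝ, ∀ n : Fin N,
      D ρ n = if n ∈ S then π₂ ρ n else ρ n - π₂ ρ n := by
  subst hβ hγ₂ hγ₁
  intro ρ n
  have hf1 : f₁ ρ = ρ := by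
    funext m; simp [hf₁]
  rw [hD, hf1]
  simp only [Pi.add_apply, Pi.smul_apply, Pi.sub_apply, hπ₁, hf₂, Pi.sub_apply,
    Pi.smul_apply, smul_eq_mul]
  split <;> ring
end

section
/- Let d ≥ 1, σ > 0, r₀ ∈ ℝ^d, and define the point spread function g(r) = (8/(πσ))^{d/4} · exp(−2‖r‖²/σ) and the single Gaussian atom ρ⁽¹⁾(r) = (2/(πσ))^{d/4} · exp(−‖r − r₀‖²/σ). Then ρ⁽¹⁾ satisfies Sayre's equation exactly in the continuum: for every r ∈ ℝ^d, ∫_{ℝ^d} g(r − s) · (ρ⁽¹⁾(s))² ds = ρ⁽¹⁾(r). -/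
open MeasureTheory

/-- A single Gaussian atom satisfies Sayre's equation exactly in the continuum:
`g ∗ (ρ⁽¹⁾)² = ρ⁽¹⁾` on `ℝ^d`. -/
theorem gaussian_atom_satisfies_sayre_equation
    (d : ℕ) (hd : 1 ≤ d) (σ : ℝ) (hσ : 0 < σ)
    (r₀ : EuclideanSpace ℝ (Fin d))
    (g ρ₁ : EuclideanSpace ℝ (Fin d) → ℝ)
    (hg : ∀ r, g r = (8 / (Real.pi * σ)) ^ ((d : ℝ) / 4) * Real.exp (-2 * ‖r‖ ^ 2 / σ))
    (hρ₁ : ∀ r, ρ₁ r = (2 / (Real.pi * σ)) ^ ((d : ℝ) / 4) * Real.exp (-‖r - r₀‖ ^ 2 / σ)) :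
    ∀ r : EuclideanSpace ℝ (Fin d),
      ∫ s : EuclideanSpace ℝ (Fin d), g (r - s) * (ρ₁ s) ^ 2 = ρ₁ r := by
  intro r
  have hπσ : 0 < Real.pi * σ := mul_pos Real.pi_pos hσ
  set A : ℝ := (8 / (Real.pi * σ)) ^ ((d : ℝ) / 4) with hA
  set B : ℝ := (2 / (Real.pi * σ)) ^ ((d : ℝ) / 4) with hB
  set m : EuclideanSpace ℝ (Fin d) := (2 : ℝ)⁻¹ • (r + r₀) with hm
  have key : ∀ s : EuclideanSpace ℝ (Fin d),
      g (r - s) * (ρ₁ s) ^ 2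
        = (A * B ^ 2 * Real.exp (-‖r - r₀‖ ^ 2 / σ)) * Real.exp (-(4/σ) * ‖s - m‖ ^ 2) := by
    intro s
    rw [hg, hρ₁]
    rw [mul_pow, ← Real.exp_nat_mul]
    have hpar := parallelogram_law_with_norm ℝ (r - s) (s - r₀)
    have e1 : (r - s) + (s - r₀) = r - r₀ := by abel
    have e2 : (r - s) - (s - r₀) = (2 : ℝ) • (m - s) := by
      rw [hm]; module
    rw [e1, e2, norm_smul] at hpar
    have hns : ‖m - s‖ = ‖s - m‖ := norm_sub_rev _ _
    have hexp : (-2 * ‖r - s‖ ^ 2 / σ) + (2 : ℕ) * (-‖s - r₀‖ ^ 2 / σ)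
        = (-‖r - r₀‖ ^ 2 / σ) + (-(4/σ) * ‖s - m‖ ^ 2) := by
      have h2n : ‖(2:ℝ)‖ = 2 := by norm_num
      rw [h2n, hns] at hpar
      have : ‖r - r₀‖ ^ 2 + 4 * ‖s - m‖ ^ 2 = 2 * (‖r - s‖ ^ 2 + ‖s - r₀‖ ^ 2) := by
        rw [pow_two, pow_two, pow_two, pow_two]; nlinarith [hpar]
      field_simp
      push_cast
      nlinarith [this]
    rw [mul_mul_mul_comm, ← Real.exp_add, hexp, Real.exp_add]
    ring
  rw [MeasureTheory.integral_congr_ae (Filter.Eventually.of_forall key),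
    MeasureTheory.integral_const_mul]
  rw [MeasureTheory.integral_sub_right_eq_self
    (fun v : EuclideanSpace ℝ (Fin d) ↦ Real.exp (-(4/σ) * ‖v‖ ^ 2)) m]
  rw [GaussianFourier.integral_rexp_neg_mul_sq_norm (by positivity : (0:ℝ) < 4/σ)]
  have hrank : (Module.finrank ℝ (EuclideanSpace ℝ (Fin d)) : ℝ) = (d : ℝ) := by
    simp [finrank_euclideanSpace]
  rw [hrank, hρ₁]
  have hπ4 : Real.pi / (4/σ) = Real.pi * σ / 4 := by field_simp
  rw [hπ4]
  have hconst : A * B ^ 2 * (Real.pi * σ / 4) ^ ((d:ℝ)/2) = B := by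
    rw [hA, hB, Real.rpow_def_of_pos (by positivity : (0:ℝ) < 8/(Real.pi*σ)),
      Real.rpow_def_of_pos (by positivity : (0:ℝ) < 2/(Real.pi*σ)),
      Real.rpow_def_of_pos (by positivity : (0:ℝ) < Real.pi*σ/4),
      ← Real.exp_nat_mul, ← Real.exp_add, ← Real.exp_add]
    congr 1
    have l8 : Real.log (8/(Real.pi*σ)) = 3 * Real.log 2 - Real.log (Real.pi*σ) := by
      rw [Real.log_div (by norm_num) hπσ.ne', show (8:ℝ)=2^3 by norm_num, Real.log_pow]
      push_cast; ring
    have l2 : Real.log (2/(Real.pi*σ)) = Real.log 2 - Real.log (Real.pi*σ) :=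
      Real.log_div (by norm_num) hπσ.ne'
    have l4 : Real.log (Real.pi*σ/4) = Real.log (Real.pi*σ) - 2*Real.log 2 := by
      rw [Real.log_div hπσ.ne' (by norm_num), show (4:ℝ)=2^2 by norm_num, Real.log_pow]
      push_cast; ring
    rw [l8, l2, l4]; push_cast; ring
  linear_combination Real.exp (-‖r - r₀‖ ^ 2 / σ) * hconst
end
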